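/- Both bounds p_{00} + p_{1(K−1)} − 1 ≤ φ ≤ 1 − p_{10} − p_{0(K−1)} are sharp: for any probability vector (p_{xy}) there exist joint distributions of (X, Y(0), Y(1)) consistent with the observed probabilities achieving the lower bound and the upper bound respectively for φ. -/

import Mathlib

lemma doubA {K : ℕ} (c : Fin K) (q : Fin K → ℝ) (R : Fin K → Fin K → Prop)
    [∀ a b, Decidable (R a b)] :
    ∑ a, ∑ b, (if R a b then (if b = c then q a else 0) else 0)
      = ∑ a, (if R a c then q a else 0) := by
  refine Finset.sum_congr rfl fun a _ => ?_
  have : ∀ b, (if R a b then (if b = c then q a else 0) else 0)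
      = (if b = c then (if R a c then q a else 0) else 0) := by
    intro b
    by_cases hb : b = c
    · subst hb; simp
    · simp [hb]
  simp only [this, Finset.sum_ite_eq', Finset.mem_univ, if_true]

lemma doubB {K : ℕ} (c : Fin K) (q : Fin K → ℝ) (R : Fin K → Fin K → Prop)
    [∀ a b, Decidable (R a b)] :
    ∑ a, ∑ b, (if R a b then (if a = c then q b else 0) else 0)
      = ∑ b, (if R c b then q b else 0) := by
  rw [Finset.sum_comm]
  exact doubA c q (fun b a => R a b)

lemma sum_if_ne {K : ℕ} (c : Fin K) (g : Fin K → ℝ) :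
    ∑ a, (if a = c then 0 else g a) = (∑ a, g a) - g c := by
  have h : ∑ a : Fin K, (if a = c then g a else 0) = g c := by
    simp [Finset.sum_ite_eq']
  have h2 : ∑ a : Fin K, ((if a = c then g a else 0) + (if a = c then 0 else g a))
      = ∑ a, g a := Finset.sum_congr rfl fun a _ => by split_ifs <;> ring
  rw [Finset.sum_add_distrib, h] at h2; linarith

lemma sum_if_eqc {K : ℕ} (c : Fin K) (g : Fin K → ℝ) :
    ∑ a : Fin K, (if a = c then g a else 0) = g c := by
  simp [Finset.sum_ite_eq']

/-- Sharpness of both bounds p_{00} + p_{1(K−1)} − 1 ≤ φ ≤ 1 − p_{10} − p_{0(K−1)}.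
`f x y0 y1` is the joint probability that `X = x, Y(0) = y0, Y(1) = y1`. -/
theorem stmt9 {K : ℕ} (hK : 2 ≤ K) (p : Fin 2 → Fin K → ℝ)
    (hp : ∀ x y, 0 ≤ p x y) (hsum : ∑ x, ∑ y, p x y = 1) :
    (∃ f : Fin 2 → Fin K → Fin K → ℝ,
      (∀ x y0 y1, 0 ≤ f x y0 y1) ∧
      (∑ x, ∑ y0, ∑ y1, f x y0 y1 = 1) ∧
      (∀ y : Fin K, ∑ y1, f 0 y y1 = p 0 y) ∧
      (∀ y : Fin K, ∑ y0, f 1 y0 y = p 1 y) ∧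
      (∑ x, ∑ y0, ∑ y1, (if y0 < y1 then f x y0 y1 else 0))
        - (∑ x, ∑ y0, ∑ y1, (if y1 < y0 then f x y0 y1 else 0))
        = p 0 ⟨0, by omega⟩ + p 1 ⟨K - 1, by omega⟩ - 1) ∧
    (∃ f : Fin 2 → Fin K → Fin K → ℝ,
      (∀ x y0 y1, 0 ≤ f x y0 y1) ∧
      (∑ x, ∑ y0, ∑ y1, f x y0 y1 = 1) ∧
      (∀ y : Fin K, ∑ y1, f 0 y y1 = p 0 y) ∧
      (∀ y : Fin K, ∑ y0, f 1 y0 y = p 1 y) ∧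
      (∑ x, ∑ y0, ∑ y1, (if y0 < y1 then f x y0 y1 else 0))
        - (∑ x, ∑ y0, ∑ y1, (if y1 < y0 then f x y0 y1 else 0))
        = 1 - p 1 ⟨0, by omega⟩ - p 0 ⟨K - 1, by omega⟩) := by
  have hK0 : 0 < K := by omega
  have hKK : K - 1 < K := by omega
  set z0 : Fin K := ⟨0, hK0⟩ with hz0
  set zK : Fin K := ⟨K - 1, hKK⟩ with hzK
  -- basic order facts
  have hlt0 : ∀ y : Fin K, ¬ y < z0 := by
    intro y h
    have h' : y.val < 0 := Fin.lt_def.mp h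
    omega
  have hltK : ∀ y : Fin K, ¬ zK < y := by
    intro y h
    have h' : K - 1 < y.val := Fin.lt_def.mp h
    have := y.isLt; omega
  have hne0 : ∀ y : Fin K, (z0 < y) = ¬(y = z0) := by
    intro y
    have hy := y.isLt
    simp only [Fin.lt_def, Fin.ext_iff, eq_iff_iff, hz0, Fin.val_mk]
    constructor <;> intro h <;> omega
  have hneK : ∀ y : Fin K, (y < zK) = ¬(y = zK) := by
    intro y
    have hy := y.isLt
    simp only [Fin.lt_def, Fin.ext_iff, eq_iff_iff, hzK, Fin.val_mk]
    constructor <;> intro h <;> omega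
  have hsum2 : (∑ y, p 0 y) + (∑ y, p 1 y) = 1 := by
    rw [Fin.sum_univ_two] at hsum; exact hsum
  constructor
  · refine ⟨fun x y0 y1 => if x = 0 then (if y1 = z0 then p 0 y0 else 0)
      else (if y0 = zK then p 1 y1 else 0), ?_, ?_, ?_, ?_, ?_⟩
    · intro x y0 y1; dsimp only; split_ifs <;> first | exact hp _ _ | exact le_refl 0
    · rw [Fin.sum_univ_two]
      simp only [show ((0:Fin 2) = 0) = True from by simp, show ((1:Fin 2) = 0) = False from by simp,
        if_true, if_false]
      have h1 : ∑ y0 : Fin K, ∑ y1 : Fin K, (if y1 = z0 then p 0 y0 else 0)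
          = ∑ y0, p 0 y0 := Finset.sum_congr rfl fun y0 _ => sum_if_eqc z0 _
      have h2 : ∑ y0 : Fin K, ∑ y1 : Fin K, (if y0 = zK then p 1 y1 else 0)
          = ∑ y1, p 1 y1 := by
        have : ∀ y0 : Fin K, ∑ y1 : Fin K, (if y0 = zK then p 1 y1 else 0)
            = (if y0 = zK then ∑ y1, p 1 y1 else 0) := fun y0 => by split_ifs <;> simp
        simp only [this, sum_if_eqc]
      rw [h1, h2, hsum2]
    · intro y; simp only [show ((0:Fin 2) = 0) = True from by simp, if_true, sum_if_eqc]
    · intro y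
      simp only [show ((1:Fin 2) = 0) = False from by simp, if_false]
      have : ∀ y0 : Fin K, (if y0 = zK then p 1 y else 0)
          = (if y0 = zK then p 1 y else 0) := fun _ => rfl
      rw [sum_if_eqc zK (fun _ => p 1 y)]
    · rw [Fin.sum_univ_two, Fin.sum_univ_two]
      simp only [show ((0:Fin 2) = 0) = True from by simp, show ((1:Fin 2) = 0) = False from by simp,
        if_true, if_false]
      rw [doubA z0 (fun y0 => p 0 y0) (· < ·), doubA z0 (fun y0 => p 0 y0) (fun a b => b < a),
          doubB zK (fun y1 => p 1 y1) (· < ·), doubB zK (fun y1 => p 1 y1) (fun a b => b < a)]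
      simp only [hlt0, if_false, hltK, Finset.sum_const_zero]
      simp only [hne0, hneK, ite_not]
      rw [sum_if_ne z0 (fun y => p 0 y), sum_if_ne zK (fun y => p 1 y)]
      linarith
  · refine ⟨fun x y0 y1 => if x = 0 then (if y1 = zK then p 0 y0 else 0)
      else (if y0 = z0 then p 1 y1 else 0), ?_, ?_, ?_, ?_, ?_⟩
    · intro x y0 y1; dsimp only; split_ifs <;> first | exact hp _ _ | exact le_refl 0
    · rw [Fin.sum_univ_two]
      simp only [show ((0:Fin 2) = 0) = True from by simp, show ((1:Fin 2) = 0) = False from by simp,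
        if_true, if_false]
      have h1 : ∑ y0 : Fin K, ∑ y1 : Fin K, (if y1 = zK then p 0 y0 else 0)
          = ∑ y0, p 0 y0 := Finset.sum_congr rfl fun y0 _ => sum_if_eqc zK _
      have h2 : ∑ y0 : Fin K, ∑ y1 : Fin K, (if y0 = z0 then p 1 y1 else 0)
          = ∑ y1, p 1 y1 := by
        have : ∀ y0 : Fin K, ∑ y1 : Fin K, (if y0 = z0 then p 1 y1 else 0)
            = (if y0 = z0 then ∑ y1, p 1 y1 else 0) := fun y0 => by split_ifs <;> simp
        simp only [this, sum_if_eqc]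
      rw [h1, h2, hsum2]
    · intro y; simp only [show ((0:Fin 2) = 0) = True from by simp, if_true, sum_if_eqc]
    · intro y
      simp only [show ((1:Fin 2) = 0) = False from by simp, if_false]
      rw [sum_if_eqc z0 (fun _ => p 1 y)]
    · rw [Fin.sum_univ_two, Fin.sum_univ_two]
      simp only [show ((0:Fin 2) = 0) = True from by simp, show ((1:Fin 2) = 0) = False from by simp,
        if_true, if_false]
      rw [doubA zK (fun y0 => p 0 y0) (· < ·), doubA zK (fun y0 => p 0 y0) (fun a b => b < a),
          doubB z0 (fun y1 => p 1 y1) (· < ·), doubB z0 (fun y1 => p 1 y1) (fun a b => b < a)]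
      simp only [hlt0, if_false, hltK, Finset.sum_const_zero]
      simp only [hne0, hneK, ite_not]
      rw [sum_if_ne zK (fun y => p 0 y), sum_if_ne z0 (fun y => p 1 y)]
      linarith
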